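/- Let (V, σ, F) satisfy P0–P4 and AP1 with four consecutive vertices m2, m1, p1, p2 on the circle having signs −, −, +, + respectively. Then there do not exist sets U1, U2 ∈ F such that U1 is m1-dangerous (U1 excludes m1 and all other negative vertices lie in U1) and U2 is p1-dangerous (p1 is the only positive vertex of U2). -/
import Mathlib


/-- A set of vertices on the circle `ZMod n` is a circular interval if it consists of
consecutive vertices. -/
def IsCircularInterval {n : ℕ} (U : Set (ZMod n)) : Prop :=
  ∃ (a : ZMod n) (k : ℕ), U = {x | ∃ i : ℕ, i < k ∧ x = a + (i : ZMod n)}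

/-- Let `(V, σ, F)` satisfy P0–P4 and AP1, with four consecutive vertices
`m2, m1, p1, p2` on the circle signed `−, −, +, +`. Then there do not exist `U1, U2 ∈ F`
with `U1` an `m1`-dangerous set (`m1` is the unique negative vertex outside `U1`) and `U2` a
`p1`-dangerous set (`p1` is the unique positive vertex of `U2`). (`true` = `+`, `false` = `−`;
the circle is `ZMod n`.) -/
theorem stmt_10 {n : ℕ} (hn : 4 ≤ n)
    (σ : ZMod n → Bool) (F : Set (Set (ZMod n)))
    (hF : ∀ U ∈ F, U ≠ ∅ ∧ U ≠ Set.univ)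
    (hP0 : ∀ U ∈ F, IsCircularInterval U)
    (hP1 : ∀ U ∈ F, ∀ W ∈ F, (U ∩ W).Nonempty → U ∪ W ≠ Set.univ →
      U ∩ W ∈ F ∧ U ∪ W ∈ F)
    (hP2 : ∀ U ∈ F, (∃ u ∈ U, σ u = true) ∧ (∃ v ∉ U, σ v = false))
    (hP3 : ∀ U ∈ F, ∀ W ∈ F, U ∩ W = ∅ → ∃ v ∉ U ∪ W, σ v = false)
    (hP4 : ∀ U ∈ F, ∀ W ∈ F, U ∪ W = Set.univ → ∃ u ∈ U ∩ W, σ u = true)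
    (hAP1 : ∀ U ∈ F, ∀ u ∈ U, σ u = true →
      ∀ u', u' ∉ U → (u' = u + 1 ∨ u = u' + 1) → σ u' = true)
    (m2 m1 p1 p2 : ZMod n)
    (hm1 : m1 = m2 + 1) (hp1 : p1 = m2 + 2) (hp2 : p2 = m2 + 3)
    (hσm2 : σ m2 = false) (hσm1 : σ m1 = false)
    (hσp1 : σ p1 = true) (hσp2 : σ p2 = true) :
    ¬ ∃ U1 ∈ F, ∃ U2 ∈ F,
        (m1 ∉ U1 ∧ ∀ x ∉ U1, σ x = false → x = m1) ∧
        (p1 ∈ U2 ∧ ∀ x ∈ U2, σ x = true → x = p1) := by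
  rintro ⟨U1, hU1, U2, hU2, ⟨hm1U1, hU1dang⟩, ⟨hp1U2, hU2dang⟩⟩
  have hp1m1 : p1 = m1 + 1 := by rw [hp1, hm1]; ring
  have hm1U2 : m1 ∈ U2 := by
    by_contra h
    have := hAP1 U2 hU2 p1 hp1U2 hσp1 m1 h (Or.inr hp1m1)
    simp [hσm1] at this
  have hne : (U1 ∩ U2).Nonempty := by
    by_contra h
    rw [Set.not_nonempty_iff_eq_empty] at h
    obtain ⟨v, hv, hσv⟩ := hP3 U1 hU1 U2 hU2 h
    have hv1 : v ∉ U1 := fun hv1 => hv (Or.inl hv1)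
    have := hU1dang v hv1 hσv
    exact hv (Or.inr (this ▸ hm1U2))
  by_cases hcov : U1 ∪ U2 = Set.univ
  · obtain ⟨u, hu, hσu⟩ := hP4 U1 hU1 U2 hU2 hcov
    have hup1 : u = p1 := hU2dang u hu.2 hσu
    have := hAP1 U1 hU1 p1 (hup1 ▸ hu.1) hσp1 m1 hm1U1 (Or.inr hp1m1)
    simp [hσm1] at this
  · obtain ⟨_, hUn⟩ := hP1 U1 hU1 U2 hU2 hne hcov
    obtain ⟨_, ⟨v, hv, hσv⟩⟩ := hP2 _ hUn
    have hv1 : v ∉ U1 := fun h => hv (Or.inl h)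
    have := hU1dang v hv1 hσv
    exact hv (Or.inr (this ▸ hm1U2))
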